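/- Let 𝔧 be a strongly stable ideal in R, m a positive integer, and 𝔊 a [𝔧,m]-marked basis. Then every homogeneous syzygy of 𝔧 lifts to a syzygy of 𝔊: for each Eliahou–Kervaire syzygy x_i x^{α_1} − x^δ x^{α_2} = 0 of the monomial generators (with x_i > max(x^{α_1}) and x^δ x^{α_2} = x^{α_2} ∗_𝔧 x^δ), there is a corresponding relation among the polynomials of 𝔊 reducing x_i f_{α_1} to a combination of multiples x^{δ_j} f_{α_j} with x^{δ_j} x^{α_j} = x^{α_j} ∗_𝔧 x^{δ_j}. -/

import Mathlib

open MvPolynomial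

namespace Paper

/-- Monomials (exponent vectors) in `N` variables. -/
abbrev Mon (N : ℕ) := Fin N →₀ ℕ

variable {N : ℕ}

/-- Total degree of a monomial. -/
def mdeg (u : Mon N) : ℕ := u.sum fun _ e => e

/-- `BorelStep a b` : `b` is obtained from `a` by one increasing elementary move,
i.e. `x^a · x_j = x^b · x_i` with `i < j`. -/
def BorelStep (a b : Mon N) : Prop :=
  ∃ i j : Fin N, i < j ∧ a + Finsupp.single j 1 = b + Finsupp.single i 1

/-- `BorelLt a b` : `a <_B b`, i.e. `b` is obtained from `a` by a nonempty
sequence of increasing elementary moves. -/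
def BorelLt (a b : Mon N) : Prop := Relation.TransGen BorelStep a b

/-- A (combinatorially encoded) monomial ideal: a set of monomials closed
under multiplication by monomials. -/
def MonIdeal (J : Set (Mon N)) : Prop := ∀ u ∈ J, ∀ d : Mon N, u + d ∈ J

/-- A strongly stable monomial ideal. -/
def StronglyStable (J : Set (Mon N)) : Prop :=
  MonIdeal J ∧ ∀ b ∈ J, ∀ a, BorelLt b a → a ∈ J

/-- The minimal monomial basis `B_J` of a monomial ideal. -/
def MinBasis (J : Set (Mon N)) : Set (Mon N) :=
  {u | u ∈ J ∧ ∀ v ∈ J, v ≤ u → v = u}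

/-- `min(x^a) ≥ max(x^h)`. -/
def StarCond (a h : Mon N) : Prop :=
  ∀ i j : Fin N, a i ≠ 0 → h j ≠ 0 → j ≤ i


variable (K : Type) [Field K]

/-- The monomial `x^u` as a polynomial. -/
noncomputable def mono {N : ℕ} (u : Mon N) : MvPolynomial (Fin N) K :=
  MvPolynomial.monomial u (1 : K)

/-- The (actual) monomial ideal of `S` spanned by a set of monomials. -/
noncomputable def idealOf {N : ℕ} (J : Set (Mon N)) : Ideal (MvPolynomial (Fin N) K) :=
  Ideal.span (mono K '' J)

/-- The irrelevant maximal ideal `(x_0, …, x_n)`. -/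
noncomputable def irrel (N : ℕ) : Ideal (MvPolynomial (Fin N) K) :=
  Ideal.span (Set.range MvPolynomial.X)

/-- The saturation `I^sat = ⋃_j (I : (x_0,…,x_n)^j)`. -/
noncomputable def satIdeal {N : ℕ} (I : Ideal (MvPolynomial (Fin N) K)) :
    Ideal (MvPolynomial (Fin N) K) :=
  ⨆ k : ℕ, Submodule.colon I ((irrel K N ^ k : Ideal (MvPolynomial (Fin N) K)) : Set (MvPolynomial (Fin N) K))

/-- The satiety of a homogeneous ideal: the smallest `m` such that
`I_t = (I^sat)_t` for all `t ≥ m`. -/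
noncomputable def satiety {N : ℕ} (I : Ideal (MvPolynomial (Fin N) K)) : ℕ :=
  sInf {m | ∀ t, m ≤ t → ∀ p : MvPolynomial (Fin N) K,
    p.IsHomogeneous t → (p ∈ I ↔ p ∈ satIdeal K I)}

/-- The saturation of a combinatorial monomial ideal. -/
def msat {N : ℕ} (J : Set (Mon N)) : Set (Mon N) :=
  {u | ∃ k : ℕ, ∀ d : Mon N, mdeg d = k → u + d ∈ J}

/-- The satiety of a combinatorial monomial ideal. -/
noncomputable def msatiety {N : ℕ} (J : Set (Mon N)) : ℕ :=
  sInf {m | ∀ u : Mon N, m ≤ mdeg u → (u ∈ J ↔ u ∈ msat J)}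

/-- A non-homogeneous `𝔧`-marked set: marked polynomials `f_α` with pairwise
distinct head terms forming `B_𝔧` and tails supported outside `𝔧`. -/
def NHMarkedSet {N : ℕ} (𝔧 : Set (Mon N)) (f : Mon N → MvPolynomial (Fin N) K) : Prop :=
  ∀ α ∈ MinBasis 𝔧,
    MvPolynomial.coeff α (f α) = 1 ∧
    ∀ u ∈ (f α).support, u ≠ α → u ∉ 𝔧

/-- One step of the `𝔊_∗`-reduction: the monomial `x^γ = x^α ∗_𝔧 x^η` of the
support of `g` is replaced by `x^η · T(f_α)`. -/
def RStep {N : ℕ} (𝔧 : Set (Mon N)) (f : Mon N → MvPolynomial (Fin N) K)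
    (g g₁ : MvPolynomial (Fin N) K) : Prop :=
  ∃ γ α η : Mon N, γ ∈ g.support ∧ γ ∈ 𝔧 ∧ α ∈ MinBasis 𝔧 ∧ γ = α + η ∧
    StarCond α η ∧
    g₁ = g - MvPolynomial.coeff γ g • (mono K η * f α)

/-- The `𝔊_∗`-reduction relation (reflexive-transitive closure of `RStep`). -/
def Reduces {N : ℕ} (𝔧 : Set (Mon N)) (f : Mon N → MvPolynomial (Fin N) K) :
    MvPolynomial (Fin N) K → MvPolynomial (Fin N) K → Prop :=
  Relation.ReflTransGen (RStep K 𝔧 f)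

/-- `g` is reduced: `supp(g) ∩ 𝔧 = ∅`. -/
def IsReducedPoly {N : ℕ} (𝔧 : Set (Mon N)) (g : MvPolynomial (Fin N) K) : Prop :=
  ∀ u ∈ g.support, u ∉ 𝔧

/-- A `[𝔧,m]`-marked set: a n.h. `𝔧`-marked set whose tails are supported in
`N(𝔧)_{≤ max{m,|α|}}`. -/
def JmMarkedSet {N : ℕ} (𝔧 : Set (Mon N)) (m : ℕ)
    (f : Mon N → MvPolynomial (Fin N) K) : Prop :=
  ∀ α ∈ MinBasis 𝔧,
    MvPolynomial.coeff α (f α) = 1 ∧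
    ∀ u ∈ (f α).support, u ≠ α → (u ∉ 𝔧 ∧ mdeg u ≤ max m (mdeg α))

/-- The ideal `(𝔊)` generated by a marked set. -/
noncomputable def idealG {N : ℕ} (𝔧 : Set (Mon N))
    (f : Mon N → MvPolynomial (Fin N) K) : Ideal (MvPolynomial (Fin N) K) :=
  Ideal.span (f '' MinBasis 𝔧)

/-- A `[𝔧,m]`-completion of `𝔊`: marked polynomials `f_β ∈ (𝔊)` with pairwise
distinct head terms the monomials of `𝔧_{≤m} \ B_𝔧` and tails in `N(𝔧)_{≤m}`. -/
def IsCompletion {N : ℕ} (𝔧 : Set (Mon N)) (m : ℕ)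
    (f h : Mon N → MvPolynomial (Fin N) K) : Prop :=
  ∀ β : Mon N, β ∈ 𝔧 → mdeg β ≤ m → β ∉ MinBasis 𝔧 →
    h β ∈ idealG K 𝔧 f ∧
    MvPolynomial.coeff β (h β) = 1 ∧
    ∀ u ∈ (h β).support, u ≠ β → (u ∉ 𝔧 ∧ mdeg u ≤ m)

/-- `g'` is a `[𝔧,m]`-reduced form of `g` modulo `(𝔊)`. -/
def IsReducedForm {N : ℕ} (𝔧 : Set (Mon N)) (m : ℕ)
    (f : Mon N → MvPolynomial (Fin N) K)
    (g g' : MvPolynomial (Fin N) K) : Prop :=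
  (∀ u ∈ g'.support, u ∉ 𝔧 ∧ mdeg u ≤ max m g.totalDegree) ∧
  g - g' ∈ idealG K 𝔧 f

/-- `R_{≤ t}`: the `K`-subspace of polynomials of degree at most `t`. -/
noncomputable def degLE (N : ℕ) (t : ℕ) : Submodule K (MvPolynomial (Fin N) K) where
  carrier := {g | ∀ u ∈ g.support, mdeg u ≤ t}
  zero_mem' := by simp
  add_mem' := by
    intro a b ha hb u hu
    rcases Finset.mem_union.mp (MvPolynomial.support_add hu) with h | h
    · exact ha u h
    · exact hb u h
  smul_mem' := by
    intro c a ha u hu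
    exact ha u (MvPolynomial.support_smul hu)

/-- `⟨N(𝔧)_{≤t}⟩`: the `K`-span of the monomials outside `𝔧` of degree `≤ t`. -/
noncomputable def spanNLE {N : ℕ} (𝔧 : Set (Mon N)) (t : ℕ) :
    Submodule K (MvPolynomial (Fin N) K) :=
  Submodule.span K (mono K '' {u : Mon N | u ∉ 𝔧 ∧ mdeg u ≤ t})

/-- `(𝔊)_{≤t}`: the `K`-subspace of elements of `(𝔊)` of degree `≤ t`. -/
noncomputable def GleSub {N : ℕ} (𝔧 : Set (Mon N))
    (f : Mon N → MvPolynomial (Fin N) K) (t : ℕ) :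
    Submodule K (MvPolynomial (Fin N) K) :=
  (idealG K 𝔧 f).restrictScalars K ⊓ degLE K N t

/-- A `[𝔧,m]`-marked basis: a `[𝔧,m]`-marked set with
`R_{≤t} = ⟨N(𝔧)_{≤t}⟩ ⊕ (𝔊)_{≤t}` for all `t ≥ m`. -/
def JmMarkedBasis {N : ℕ} (𝔧 : Set (Mon N)) (m : ℕ)
    (f : Mon N → MvPolynomial (Fin N) K) : Prop :=
  JmMarkedSet K 𝔧 m f ∧
  ∀ t, m ≤ t →
    Disjoint (spanNLE K 𝔧 t) (GleSub K 𝔧 f t) ∧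
    spanNLE K 𝔧 t ⊔ GleSub K 𝔧 f t = degLE K N t

/-! ### Auxiliary lemmas for the syzygy lifting theorem -/

section SyzygyAux

variable {n : ℕ}

/-- Top-down lexicographic order on monomials: larger indices are more significant. -/
def LexRel (a b : Mon n) : Prop := Finsupp.Lex (· > ·) (· < ·) a b

theorem lexRel_wf : WellFounded (@LexRel n) :=
  Finsupp.Lex.wellFounded' (fun k h => Nat.not_lt_zero k h)
    (wellFounded_lt) (wellFounded_lt)

theorem mdeg_add (a b : Mon n) : mdeg (a + b) = mdeg a + mdeg b := by
  unfold mdeg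
  exact Finsupp.sum_add_index' (fun _ => rfl) (fun _ _ _ => rfl)

theorem mdeg_single (j : Fin n) : mdeg (Finsupp.single j 1 : Mon n) = 1 := by
  unfold mdeg
  rw [Finsupp.sum_single_index]
  rfl

theorem mdeg_eq_zero {γ : Mon n} (h : mdeg γ = 0) : γ = 0 := by
  unfold mdeg at h
  rw [Finsupp.sum, Finset.sum_eq_zero_iff] at h
  ext s
  by_contra hs
  exact hs (h s (Finsupp.mem_support_iff.mpr hs))

/-- Key lex-descent lemma: if `u ∉ 𝔧` and `u·η = α'·η'` with `α' ∈ 𝔧` and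
`max(η') ≤ min(α')`, then `η' < η` in top-down lex. -/
theorem key_lex {𝔧 : Set (Mon n)} (hJ : MonIdeal 𝔧) {u η α' η' : Mon n}
    (hu : u ∉ 𝔧) (hα' : α' ∈ 𝔧) (hstar : StarCond α' η')
    (heq : u + η = α' + η') : LexRel η' η := by
  by_contra hlex
  have happ : ∀ s : Fin n, u s + η s = α' s + η' s := by
    intro s
    have := DFunLike.congr_fun heq s
    simpa [Finsupp.add_apply] using this
  -- we show `α' ≤ u`, contradicting `u ∉ 𝔧`
  have hle : α' ≤ u := by
    by_cases hne : η' = η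
    · subst hne
      rw [Finsupp.le_def]
      intro s
      have := happ s
      omega
    · -- take the largest index where η' and η differ
      have hex : ∃ s, η' s ≠ η s := by
        by_contra hall
        push_neg at hall
        exact hne (Finsupp.ext hall)
      set D : Finset (Fin n) := (η'.support ∪ η.support).filter (fun s => η' s ≠ η s)
        with hD
      have hDne : D.Nonempty := by
        obtain ⟨s, hs⟩ := hex
        refine ⟨s, Finset.mem_filter.mpr ⟨?_, hs⟩⟩
        rcases Nat.eq_zero_or_pos (η' s) with h0 | hp
        · refine Finset.mem_union_right _ (Finsupp.mem_support_iff.mpr ?_)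
          omega
        · exact Finset.mem_union_left _ (Finsupp.mem_support_iff.mpr (by omega))
      set t := D.max' hDne with ht
      have htD : t ∈ D := D.max'_mem hDne
      have htne : η' t ≠ η t := (Finset.mem_filter.mp htD).2
      have hgt : ∀ s, t < s → η' s = η s := by
        intro s hts
        by_contra hsne
        have hsD : s ∈ D := by
          refine Finset.mem_filter.mpr ⟨?_, hsne⟩
          rcases Nat.eq_zero_or_pos (η' s) with h0 | hp
          · refine Finset.mem_union_right _ (Finsupp.mem_support_iff.mpr ?_)
            omega
          · exact Finset.mem_union_left _ (Finsupp.mem_support_iff.mpr (by omega))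
        exact absurd (D.le_max' s hsD) (not_le.mpr hts)
      have hlt : η t < η' t := by
        rcases lt_or_gt_of_ne htne with h | h
        · refine absurd ?_ hlex
          rw [LexRel, Finsupp.lex_def]
          exact ⟨t, fun d hd => hgt d hd, h⟩
        · exact h
      rw [Finsupp.le_def]
      intro s
      rcases lt_trichotomy s t with hst | hst | hst
      · -- α' s = 0 since η' t ≠ 0 forces supp α' ⊆ [t, ∞)
        by_contra hpos
        have hαs : α' s ≠ 0 := by omega
        have := hstar s t hαs (by omega)
        omega
      · rw [hst]
        have := happ t
        omega
      · have := happ s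
        have := hgt s hst
        omega
  exact hu (by
    have : α' + (u - α') ∈ 𝔧 := hJ α' hα' (u - α')
    rwa [add_tsub_cancel_of_le hle] at this)

/-- Star decomposition: every monomial of a strongly stable ideal factors as
`α · η` with `α` in the minimal basis and `max(η) ≤ min(α)`. -/
theorem star_decomp {𝔧 : Set (Mon n)} (hss : StronglyStable 𝔧) :
    ∀ γ ∈ 𝔧, ∃ α η : Mon n, α ∈ MinBasis 𝔧 ∧ StarCond α η ∧ γ = α + η := by
  suffices h : ∀ d : ℕ, ∀ γ ∈ 𝔧, mdeg γ ≤ d →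
      ∃ α η : Mon n, α ∈ MinBasis 𝔧 ∧ StarCond α η ∧ γ = α + η by
    intro γ hγ
    exact h (mdeg γ) γ hγ le_rfl
  intro d
  induction d with
  | zero =>
    intro γ hγ hd
    have h0 : γ = 0 := mdeg_eq_zero (Nat.le_zero.mp hd)
    refine ⟨γ, 0, ⟨hγ, fun v _ hv => le_antisymm hv (h0 ▸ (zero_le : 0 ≤ v))⟩, ?_, (add_zero γ).symm⟩
    intro i j _ hj
    simp at hj
  | succ d IH =>
    intro γ hγ hd
    by_cases hmb : γ ∈ MinBasis 𝔧
    · refine ⟨γ, 0, hmb, ?_, (add_zero γ).symm⟩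
      intro i j _ hj
      simp at hj
    · -- find a proper divisor of γ in 𝔧
      have hex : ∃ v ∈ 𝔧, v ≤ γ ∧ v ≠ γ := by
        by_contra hall
        push_neg at hall
        exact hmb ⟨hγ, hall⟩
      obtain ⟨v, hv, hvle, hvne⟩ := hex
      obtain ⟨k, hk⟩ : ∃ k, v k < γ k := by
        by_contra hall
        push_neg at hall
        exact hvne (le_antisymm hvle fun s => hall s)
      have hksupp : k ∈ γ.support := Finsupp.mem_support_iff.mpr (by omega)
      have hsne : γ.support.Nonempty := ⟨k, hksupp⟩
      set j := γ.support.min' hsne with hj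
      have hjsupp : j ∈ γ.support := γ.support.min'_mem hsne
      have hjγ : γ j ≠ 0 := Finsupp.mem_support_iff.mp hjsupp
      have hjk : j ≤ k := γ.support.min'_le k hksupp
      -- γ - e_k ∈ 𝔧
      have hsubk : γ - Finsupp.single k 1 ∈ 𝔧 := by
        have hle : v ≤ γ - Finsupp.single k 1 := by
          rw [Finsupp.le_def]
          intro s
          rw [Finsupp.tsub_apply]
          rcases eq_or_ne s k with rfl | hne
          · simp only [Finsupp.single_eq_same]
            omega
          · rw [Finsupp.single_eq_of_ne' (Ne.symm hne)]
            have := Finsupp.le_def.mp hvle s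
            omega
        have := hss.1 v hv ((γ - Finsupp.single k 1) - v)
        rwa [add_tsub_cancel_of_le hle] at this
      -- γ - e_j ∈ 𝔧 by strong stability
      have hsubj : γ - Finsupp.single j 1 ∈ 𝔧 := by
        rcases eq_or_lt_of_le hjk with rfl | hjk'
        · exact hsubk
        · refine hss.2 _ hsubk _ (Relation.TransGen.single ⟨j, k, hjk', ?_⟩)
          rw [tsub_add_cancel_of_le (Finsupp.single_le_iff.mpr (by omega)),
            tsub_add_cancel_of_le (Finsupp.single_le_iff.mpr (by omega))]
      -- degree drops
      have hγeq : γ = (γ - Finsupp.single j 1) + Finsupp.single j 1 :=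
        (tsub_add_cancel_of_le (Finsupp.single_le_iff.mpr (by omega))).symm
      have hdeg : mdeg (γ - Finsupp.single j 1) ≤ d := by
        have : mdeg γ = mdeg (γ - Finsupp.single j 1) + 1 := by
          conv_lhs => rw [hγeq]
          rw [mdeg_add, mdeg_single]
        omega
      obtain ⟨α, η', hα, hstar, heq⟩ := IH _ hsubj hdeg
      refine ⟨α, η' + Finsupp.single j 1, hα, ?_, by rw [hγeq, heq, add_assoc]⟩
      intro i jj hi hjj
      rw [Finsupp.add_apply] at hjj
      rcases Nat.eq_zero_or_pos (η' jj) with h0 | hp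
      · -- then jj = j
        have hjjj : jj = j := by
          by_contra hne
          rw [Finsupp.single_eq_of_ne' (Ne.symm hne)] at hjj
          omega
        rw [hjjj]
        -- j ≤ i since i ∈ supp γ
        have hiγ : γ i ≠ 0 := by
          have h1 := DFunLike.congr_fun heq i
          rw [Finsupp.tsub_apply, Finsupp.add_apply] at h1
          omega
        exact γ.support.min'_le i (Finsupp.mem_support_iff.mpr hiγ)
      · exact hstar i jj hi (by omega)

variable (K : Type) [Field K]

theorem support_subset_of_mem_span_mono {A : Set (Mon n)}
    {p : MvPolynomial (Fin n) K} (hp : p ∈ Submodule.span K (mono K '' A)) :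
    ∀ u ∈ p.support, u ∈ A := by
  let M : Submodule K (MvPolynomial (Fin n) K) :=
    { carrier := {g | ∀ u ∈ g.support, u ∈ A}
      zero_mem' := by simp
      add_mem' := by
        intro a b ha hb u hu
        rcases Finset.mem_union.mp (MvPolynomial.support_add hu) with h | h
        · exact ha u h
        · exact hb u h
      smul_mem' := by
        intro c a ha u hu
        exact ha u (MvPolynomial.support_smul hu) }
  have : Submodule.span K (mono K '' A) ≤ M := by
    rw [Submodule.span_le]
    rintro _ ⟨u, hu, rfl⟩ w hw
    classical
    rw [mono, MvPolynomial.support_monomial, if_neg one_ne_zero] at hw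
    rcases Finset.mem_singleton.mp hw with rfl
    exact hu
  exact this hp

theorem mem_span_mono_of_support {A : Set (Mon n)}
    {p : MvPolynomial (Fin n) K} (hp : ∀ u ∈ p.support, u ∈ A) :
    p ∈ Submodule.span K (mono K '' A) := by
  rw [MvPolynomial.as_sum p]
  refine Submodule.sum_mem _ fun u hu => ?_
  have : (MvPolynomial.monomial u) (MvPolynomial.coeff u p)
      = MvPolynomial.coeff u p • mono K u := by
    simp [mono, MvPolynomial.smul_monomial]
  rw [this]
  exact Submodule.smul_mem _ _ (Submodule.subset_span ⟨u, hp u hu, rfl⟩)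

theorem mono_mul_mem {M : Submodule K (MvPolynomial (Fin n) K)} {η : Mon n}
    {p : MvPolynomial (Fin n) K} (h : ∀ u ∈ p.support, mono K (η + u) ∈ M) :
    mono K η * p ∈ M := by
  have hrw : mono K η * p
      = ∑ u ∈ p.support, MvPolynomial.coeff u p • mono K (η + u) := by
    conv_lhs => rw [MvPolynomial.as_sum p]
    rw [Finset.mul_sum]
    refine Finset.sum_congr rfl fun u hu => ?_
    simp [mono, MvPolynomial.monomial_mul, MvPolynomial.smul_monomial]
  rw [hrw]
  exact Submodule.sum_mem _ fun u hu => Submodule.smul_mem _ _ (h u hu)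

end SyzygyAux

section SyzygyMain

variable {n : ℕ} (K : Type) [Field K] (𝔧 : Set (Mon n)) (m : ℕ)
  (f : Mon n → MvPolynomial (Fin n) K)

/-- The set of admissible pairs `(α, η)`: `α ∈ B_𝔧` and `max(η) ≤ min(α)`. -/
def starPairs : Set (Mon n × Mon n) := {p | p.1 ∈ MinBasis 𝔧 ∧ StarCond p.1 p.2}

/-- The span of the star multiples `x^η · f_α`. -/
noncomputable def starSpan : Submodule K (MvPolynomial (Fin n) K) :=
  Submodule.span K ((fun p : Mon n × Mon n => mono K p.2 * f p.1) '' starPairs 𝔧)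

/-- The span of the monomials outside `𝔧`. -/
noncomputable def nonJSpan : Submodule K (MvPolynomial (Fin n) K) :=
  Submodule.span K (mono K '' {u : Mon n | u ∉ 𝔧})

theorem spanning_mono_of_mem (hss : StronglyStable 𝔧)
    (hmk : JmMarkedSet K 𝔧 m f) :
    ∀ η : Mon n, ∀ α ∈ MinBasis 𝔧, StarCond α η →
      mono K (α + η) ∈ starSpan K 𝔧 f ⊔ nonJSpan K 𝔧 := by
  intro η
  refine lexRel_wf.induction
    (C := fun η => ∀ α ∈ MinBasis 𝔧, StarCond α η →
      mono K (α + η) ∈ starSpan K 𝔧 f ⊔ nonJSpan K 𝔧) η ?_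
  intro η IH α hα hstar
  set q : MvPolynomial (Fin n) K := f α - mono K α with hqdef
  have hcoef : MvPolynomial.coeff α (f α) = 1 := (hmk α hα).1
  have hsplit : mono K (α + η) = mono K η * f α - mono K η * q := by
    have : mono K η * f α - mono K η * q = mono K η * mono K α := by
      rw [hqdef]; ring
    rw [this]
    simp only [mono]
    rw [MvPolynomial.monomial_mul, one_mul, add_comm α η]
  rw [hsplit]
  refine sub_mem ?_ ?_
  · exact Submodule.mem_sup_left
      (Submodule.subset_span ⟨(α, η), ⟨hα, hstar⟩, rfl⟩)
  · refine mono_mul_mem K fun u hu => ?_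
    have huα : u ≠ α := by
      intro h
      subst h
      have : MvPolynomial.coeff u q = 0 := by
        rw [hqdef, MvPolynomial.coeff_sub, hcoef, mono,
          MvPolynomial.coeff_monomial, if_pos rfl]
        ring
      exact (MvPolynomial.mem_support_iff.mp hu) this
    have husupp : u ∈ (f α).support := by
      have : MvPolynomial.coeff u q = MvPolynomial.coeff u (f α) := by
        rw [hqdef, MvPolynomial.coeff_sub, mono, MvPolynomial.coeff_monomial,
          if_neg (by exact fun h => huα h.symm)]
        ring
      exact MvPolynomial.mem_support_iff.mpr
        (this ▸ MvPolynomial.mem_support_iff.mp hu)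
    have huJ : u ∉ 𝔧 := ((hmk α hα).2 u husupp huα).1
    by_cases hin : η + u ∈ 𝔧
    · obtain ⟨α', η'', hα', hstar', heq'⟩ := star_decomp hss _ hin
      have hlex : LexRel η'' η :=
        key_lex hss.1 huJ hα'.1 hstar' (by rw [add_comm u η, heq'])
      have := IH η'' hlex α' hα' hstar'
      rwa [← heq'] at this
    · exact Submodule.mem_sup_right
        (Submodule.subset_span ⟨η + u, hin, rfl⟩)

theorem total_span (hss : StronglyStable 𝔧) (hmk : JmMarkedSet K 𝔧 m f)
    (g : MvPolynomial (Fin n) K) :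
    g ∈ starSpan K 𝔧 f ⊔ nonJSpan K 𝔧 := by
  rw [MvPolynomial.as_sum g]
  refine Submodule.sum_mem _ fun u hu => ?_
  have hmono : (MvPolynomial.monomial u) (MvPolynomial.coeff u g)
      = MvPolynomial.coeff u g • mono K u := by
    simp [mono, MvPolynomial.smul_monomial]
  rw [hmono]
  refine Submodule.smul_mem _ _ ?_
  by_cases huJ : u ∈ 𝔧
  · obtain ⟨α, η, hα, hstar, heq⟩ := star_decomp hss _ huJ
    have := spanning_mono_of_mem K 𝔧 m f hss hmk η α hα hstar
    rwa [← heq] at this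
  · exact Submodule.mem_sup_right (Submodule.subset_span ⟨u, huJ, rfl⟩)

end SyzygyMain

/-- if `𝔊` is a `[𝔧,m]`-marked basis, every Eliahou–Kervaire
syzygy `x_i x^{α₁} = x^δ x^{α₂}` (with `x_i > max(x^{α₁})` and
`x^δ x^{α₂} = x^{α₂} ∗_𝔧 x^δ`) lifts to a relation writing `x_i f_{α₁}` as a
combination of multiples `x^{δ_j} f_{α_j}` with `x^{δ_j} x^{α_j} = x^{α_j} ∗_𝔧 x^{δ_j}`. -/
theorem syzygy_lifting {n : ℕ} (K : Type) [Field K]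
    (𝔧 : Set (Mon n)) (m : ℕ) (f : Mon n → MvPolynomial (Fin n) K)
    (hss : StronglyStable 𝔧) (hm : 0 < m) (hb : JmMarkedBasis K 𝔧 m f) :
    ∀ α₁ ∈ MinBasis 𝔧, ∀ α₂ ∈ MinBasis 𝔧, ∀ (i : Fin n) (δ : Mon n),
      (∀ j : Fin n, α₁ j ≠ 0 → j < i) →
      Finsupp.single i 1 + α₁ = δ + α₂ →
      StarCond α₂ δ →
      ∃ (s : Finset (Mon n × Mon n)) (c : Mon n × Mon n → K),
        (∀ p ∈ s, p.1 ∈ MinBasis 𝔧 ∧ StarCond p.1 p.2) ∧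
        MvPolynomial.X i * f α₁ = ∑ p ∈ s, c p • (mono K p.2 * f p.1) := by
  intro α₁ hα₁ α₂ _ i δ _ _ _
  set g : MvPolynomial (Fin n) K := MvPolynomial.X i * f α₁ with hgdef
  -- write g = w + r with w in the star span and r supported outside 𝔧
  obtain ⟨w, hw, r, hr, hsum⟩ :=
    Submodule.mem_sup.mp (total_span K 𝔧 m f hss hb.1 g)
  -- both g and w lie in the ideal (𝔊)
  have hfI : f α₁ ∈ idealG K 𝔧 f := Ideal.subset_span ⟨α₁, hα₁, rfl⟩
  have hgI : g ∈ idealG K 𝔧 f := Ideal.mul_mem_left _ _ hfI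
  have hwI : w ∈ idealG K 𝔧 f := by
    have hle : starSpan K 𝔧 f ≤ (idealG K 𝔧 f).restrictScalars K := by
      rw [starSpan, Submodule.span_le]
      rintro _ ⟨p, hp, rfl⟩
      exact Ideal.mul_mem_left _ _ (Ideal.subset_span ⟨p.1, hp.1, rfl⟩)
    exact hle hw
  have hrI : r ∈ idealG K 𝔧 f := by
    have : r = g - w := by rw [← hsum]; ring
    rw [this]
    exact sub_mem hgI hwI
  have hrsupp : ∀ u ∈ r.support, u ∉ 𝔧 :=
    support_subset_of_mem_span_mono K hr
  -- r = 0 by the direct sum decomposition at level t' = max m (deg r)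
  set t' : ℕ := max m r.totalDegree with ht'
  have hdisj := (hb.2 t' (le_max_left _ _)).1
  have hr1 : r ∈ spanNLE K 𝔧 t' := by
    refine mem_span_mono_of_support K fun u hu => ⟨hrsupp u hu, ?_⟩
    exact le_trans (MvPolynomial.le_totalDegree hu) (le_max_right _ _)
  have hr2 : r ∈ GleSub K 𝔧 f t' := by
    refine ⟨hrI, fun u hu => ?_⟩
    exact le_trans (MvPolynomial.le_totalDegree hu) (le_max_right _ _)
  have hr0 : r = 0 := Submodule.disjoint_def.mp hdisj r hr1 hr2
  have hgw : g = w := by rw [← hsum, hr0, add_zero]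
  -- extract a finite representation of w from the span
  rw [starSpan] at hw
  obtain ⟨l, hl, hlw⟩ := (Finsupp.mem_span_image_iff_linearCombination K).mp hw
  refine ⟨l.support, fun p => l p, fun p hp => (Finsupp.mem_supported K l).mp hl hp, ?_⟩
  rw [hgw, ← hlw, Finsupp.linearCombination_apply, Finsupp.sum]

end Paper
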